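/- Assume ∫ u2 ν(du) < ∞ and β̃ = β − ∫ u2 ν(du) > 0. If φ : [0,∞) → [0,∞) satisfies φ(t) = 1/β − ∫_0^t g_0(φ(s)) ds for every t ≥ 0, then φ(t) ≤ (1/β)·exp(−β̃·t) for every t ≥ 0. -/

import Mathlib

open MeasureTheory Real Filter Set

lemma exp_lip_nonpos {s t : ℝ} (hs : s ≤ 0) (ht : t ≤ 0) :
    |Real.exp s - Real.exp t| ≤ |s - t| := by
  wlog h : t ≤ s generalizing s t
  · rw [abs_sub_comm, abs_sub_comm s t]; exact this ht hs (le_of_not_ge h)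
  have h1 : Real.exp s - Real.exp t ≤ s - t := by
    have := Real.add_one_le_exp (t - s)
    have hes : Real.exp s ≤ 1 := Real.exp_le_one_iff.2 hs
    have : Real.exp s - Real.exp t = Real.exp s * (1 - Real.exp (t - s)) := by
      rw [mul_sub, mul_one, ← Real.exp_add]; ring_nf
    rw [this]
    calc Real.exp s * (1 - Real.exp (t - s)) ≤ 1 * (1 - Real.exp (t - s)) := by
          apply mul_le_mul_of_nonneg_right hes
          have : Real.exp (t - s) ≤ 1 := Real.exp_le_one_iff.2 (by linarith)
          linarith
      _ ≤ s - t := by have := Real.add_one_le_exp (t - s); linarith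
  have h2 : 0 ≤ Real.exp s - Real.exp t := by
    have := Real.exp_le_exp.2 h; linarith
  rw [abs_of_nonneg h2, abs_of_nonneg (by linarith : (0:ℝ) ≤ s - t)]
  exact h1

section main
variable (β : ℝ) (hβ : 0 < β) (ν : Measure (ℝ × ℝ)) [IsFiniteMeasure ν]
    (hsupp : ν {u | u.2 < 0} = 0)
    (g0 : ℝ → ℝ)
    (hg0 : ∀ x, g0 x = β * x + ∫ u : ℝ × ℝ, (Real.exp (-x * u.2) - 1) ∂ν)
    (hint : Integrable (fun u : ℝ × ℝ => u.2) ν)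

include hsupp in
lemma hae : ∀ᵐ u ∂ν, 0 ≤ u.2 := by
  rw [ae_iff]
  convert hsupp using 2
  ext u; simp [not_le]

lemma hmeas (x : ℝ) :
    AEStronglyMeasurable (fun u : ℝ × ℝ => Real.exp (-x * u.2) - 1) ν :=
  (((measurable_snd.const_mul (-x)).exp.sub measurable_const)).aestronglyMeasurable

include hsupp in
lemma hintexp {x : ℝ} (hx : 0 ≤ x) :
    Integrable (fun u : ℝ × ℝ => Real.exp (-x * u.2) - 1) ν := by
  refine Integrable.mono' (integrable_const 1) (hmeas ν x) ?_
  filter_upwards [hae ν hsupp] with u hu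
  have h1 : -x * u.2 ≤ 0 := by nlinarith
  have h2 : Real.exp (-x * u.2) ≤ 1 := Real.exp_le_one_iff.2 h1
  have h3 : 0 < Real.exp (-x * u.2) := Real.exp_pos _
  rw [Real.norm_eq_abs, abs_le]; constructor <;> linarith

include hg0 hint in
lemma g0_lower {x : ℝ} (hsupp : ν {u | u.2 < 0} = 0) (hx : 0 ≤ x) :
    (β - ∫ u : ℝ × ℝ, u.2 ∂ν) * x ≤ g0 x := by
  rw [hg0]
  have h1 : ∫ u : ℝ × ℝ, (-x) * u.2 ∂ν ≤ ∫ u : ℝ × ℝ, (Real.exp (-x * u.2) - 1) ∂ν := by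
    refine integral_mono (hint.const_mul (-x)) (hintexp ν hsupp hx) ?_
    intro u
    have := Real.add_one_le_exp (-x * u.2)
    simp only; linarith
  rw [integral_const_mul] at h1
  nlinarith [h1]

include hg0 hsupp in
lemma g0_upper {x : ℝ} (hx : 0 ≤ x) : g0 x ≤ β * x := by
  rw [hg0]
  have h1 : ∫ u : ℝ × ℝ, (Real.exp (-x * u.2) - 1) ∂ν ≤ 0 := by
    refine integral_nonpos_of_ae ?_
    filter_upwards [hae ν hsupp] with u hu
    have h1 : -x * u.2 ≤ 0 := by nlinarith
    have h2 : Real.exp (-x * u.2) ≤ 1 := Real.exp_le_one_iff.2 h1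
    simp only [Pi.zero_apply]; linarith
  linarith

include hβ hg0 hsupp hint in
lemma g0_cont : ContinuousOn g0 (Ici 0) := by
  have key : ∀ x ∈ Ici (0:ℝ), ∀ y ∈ Ici (0:ℝ),
      |g0 x - g0 y| ≤ (β + ∫ u : ℝ × ℝ, u.2 ∂ν) * |x - y| := by
    intro x hx y hy
    rw [hg0, hg0]
    have hix := hintexp ν hsupp hx
    have hiy := hintexp ν hsupp hy
    have hsub : (∫ u : ℝ × ℝ, (Real.exp (-x * u.2) - 1) ∂ν)
        - ∫ u : ℝ × ℝ, (Real.exp (-y * u.2) - 1) ∂ν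
        = ∫ u : ℝ × ℝ, (Real.exp (-x * u.2) - Real.exp (-y * u.2)) ∂ν := by
      rw [← integral_sub hix hiy]; congr 1; ext u; ring
    have hb : |∫ u : ℝ × ℝ, (Real.exp (-x * u.2) - Real.exp (-y * u.2)) ∂ν|
        ≤ |x - y| * ∫ u : ℝ × ℝ, u.2 ∂ν := by
      calc |∫ u : ℝ × ℝ, (Real.exp (-x * u.2) - Real.exp (-y * u.2)) ∂ν|
          ≤ ∫ u : ℝ × ℝ, |Real.exp (-x * u.2) - Real.exp (-y * u.2)| ∂ν := by
            simpa [Real.norm_eq_abs] using norm_integral_le_integral_norm (fun u : ℝ × ℝ => Real.exp (-x * u.2) - Real.exp (-y * u.2))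
        _ ≤ ∫ u : ℝ × ℝ, |x - y| * u.2 ∂ν := by
            have habs : Integrable (fun u : ℝ × ℝ => |Real.exp (-x * u.2) - Real.exp (-y * u.2)|) ν := by
              simpa using (hix.sub hiy).abs
            refine integral_mono_ae habs (hint.const_mul _) ?_
            filter_upwards [hae ν hsupp] with u hu
            have h1 : -x * u.2 ≤ 0 := by nlinarith [hx.out]
            have h2 : -y * u.2 ≤ 0 := by nlinarith [hy.out]
            calc |Real.exp (-x * u.2) - Real.exp (-y * u.2)|
                ≤ |(-x * u.2) - (-y * u.2)| := exp_lip_nonpos h1 h2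
              _ = |x - y| * u.2 := by
                  rw [show (-x * u.2) - (-y * u.2) = (y - x) * u.2 by ring,
                    abs_mul, abs_of_nonneg hu, abs_sub_comm]
        _ = |x - y| * ∫ u : ℝ × ℝ, u.2 ∂ν := integral_const_mul _ _
    calc |(β * x + ∫ u : ℝ × ℝ, (Real.exp (-x * u.2) - 1) ∂ν)
        - (β * y + ∫ u : ℝ × ℝ, (Real.exp (-y * u.2) - 1) ∂ν)|
        ≤ |β * x - β * y| + |(∫ u : ℝ × ℝ, (Real.exp (-x * u.2) - 1) ∂ν)
            - ∫ u : ℝ × ℝ, (Real.exp (-y * u.2) - 1) ∂ν| := by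
          have := abs_add_le (β * x - β * y)
            ((∫ u : ℝ × ℝ, (Real.exp (-x * u.2) - 1) ∂ν)
            - ∫ u : ℝ × ℝ, (Real.exp (-y * u.2) - 1) ∂ν)
          refine le_trans (le_of_eq ?_) this; congr 1; ring
      _ ≤ β * |x - y| + |x - y| * ∫ u : ℝ × ℝ, u.2 ∂ν := by
          rw [← mul_sub, abs_mul, abs_of_nonneg hβ.le, hsub]
          linarith [hb]
      _ = (β + ∫ u : ℝ × ℝ, u.2 ∂ν) * |x - y| := by ring
  intro x hx
  apply ContinuousWithinAt.mono ?_ (subset_refl _)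
  -- continuity from Lipschitz bound
  rw [Metric.continuousWithinAt_iff]
  intro ε hε
  set L := β + ∫ u : ℝ × ℝ, u.2 ∂ν with hL
  have hL0 : 0 < L := by
    have : 0 ≤ ∫ u : ℝ × ℝ, u.2 ∂ν := integral_nonneg_of_ae (hae ν hsupp)
    positivity
  refine ⟨ε / L, by positivity, ?_⟩
  intro y hy hdy
  have := key y hy x hx
  rw [Real.dist_eq] at hdy ⊢
  calc |g0 y - g0 x| ≤ L * |y - x| := this
    _ < L * (ε / L) := by
        apply mul_lt_mul_of_pos_left hdy hL0
    _ = ε := by field_simp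

end main

set_option maxHeartbeats 1000000 in
theorem stmt_8
    (β : ℝ) (hβ : 0 < β) (ν : Measure (ℝ × ℝ)) [IsFiniteMeasure ν]
    (hν : ν ≠ 0) (hsupp : ν {u | u.2 < 0} = 0) (hpos : ν {u | 0 < u.2} ≠ 0)
    (g0 : ℝ → ℝ)
    (hg0 : ∀ x, g0 x = β * x + ∫ u : ℝ × ℝ, (Real.exp (-x * u.2) - 1) ∂ν)
    (hint : Integrable (fun u : ℝ × ℝ => u.2) ν)
    (hβ' : 0 < β - ∫ u : ℝ × ℝ, u.2 ∂ν)
    (φ : ℝ → ℝ)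
    (hφnn : ∀ t : ℝ, 0 ≤ t → 0 ≤ φ t)
    (heq : ∀ t : ℝ, 0 ≤ t → φ t = 1 / β - ∫ s in (0 : ℝ)..t, g0 (φ s)) :
    ∀ t : ℝ, 0 ≤ t →
      φ t ≤ (1 / β) * Real.exp (-(β - ∫ u : ℝ × ℝ, u.2 ∂ν) * t) := by
  classical
  set c : ℝ := β - ∫ u : ℝ × ℝ, u.2 ∂ν with hcdef
  have hlow : ∀ x : ℝ, 0 ≤ x → c * x ≤ g0 x := fun x hx => by
    rw [hcdef]; exact g0_lower β ν g0 hg0 hint hsupp hx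
  have hup : ∀ x : ℝ, 0 ≤ x → g0 x ≤ β * x := fun x hx =>
    g0_upper β ν hsupp g0 hg0 hx
  have hg0c : ContinuousOn g0 (Ici 0) := g0_cont β hβ ν hsupp g0 hg0 hint
  set f : ℝ → ℝ := fun s => g0 (φ s) with hfdef
  have hfnn : ∀ s : ℝ, 0 ≤ s → 0 ≤ f s := fun s hs =>
    le_trans (mul_nonneg hβ'.le (hφnn s hs)) (hlow (φ s) (hφnn s hs))
  have hφle : ∀ s : ℝ, 0 ≤ s → φ s ≤ 1 / β := by
    intro s hs
    rw [heq s hs]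
    by_cases hI : IntervalIntegrable f volume 0 s
    · have : 0 ≤ ∫ x in (0:ℝ)..s, f x :=
        intervalIntegral.integral_nonneg hs (fun u hu => hfnn u hu.1)
      linarith
    · rw [intervalIntegral.integral_undef hI]; simp
  have hfle1 : ∀ s : ℝ, 0 ≤ s → f s ≤ 1 := by
    intro s hs
    calc f s ≤ β * φ s := hup (φ s) (hφnn s hs)
      _ ≤ β * (1 / β) := by
          exact mul_le_mul_of_nonneg_left (hφle s hs) hβ.le
      _ = 1 := by field_simp
  -- global interval integrability
  have hII : ∀ T : ℝ, 0 ≤ T → IntervalIntegrable f volume 0 T := by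
    by_contra hB
    push_neg at hB
    obtain ⟨T0, hT00, hT0⟩ := hB
    set B : Set ℝ := {t : ℝ | 0 ≤ t ∧ ¬ IntervalIntegrable f volume 0 t} with hBdef
    have hBne : B.Nonempty := ⟨T0, hT00, hT0⟩
    have hBbd : BddBelow B := ⟨0, fun x hx => hx.1⟩
    set a : ℝ := sInf B with hadef
    have ha0 : 0 ≤ a := le_csInf hBne fun x hx => hx.1
    have hup' : ∀ t : ℝ, a < t → ¬ IntervalIntegrable f volume 0 t := by
      intro t hat hInt
      obtain ⟨b, hbB, hbt⟩ := exists_lt_of_csInf_lt hBne hat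
      refine hbB.2 (hInt.mono_set ?_)
      rw [uIcc_of_le hbB.1, uIcc_of_le (hbB.1.trans hbt.le)]
      exact Icc_subset_Icc le_rfl hbt.le
    have hlo' : ∀ t : ℝ, 0 ≤ t → t < a → IntervalIntegrable f volume 0 t := by
      intro t ht hta
      by_contra h
      exact absurd (csInf_le hBbd ⟨ht, h⟩) (not_le.2 hta)
    have hφconst : ∀ t : ℝ, a < t → φ t = 1 / β := by
      intro t hat
      rw [heq t (ha0.trans hat.le), intervalIntegral.integral_undef (hup' t hat), sub_zero]
    -- φ continuous on Ico 0 a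
    have hφcont : ContinuousOn φ (Ico 0 a) := by
      intro t ht
      set s : ℝ := (t + a) / 2 with hsdef
      have hts : t < s := by simp only [hsdef]; linarith [ht.2]
      have hsa : s < a := by simp only [hsdef]; linarith [ht.2]
      have hs0 : 0 ≤ s := le_trans ht.1 hts.le
      have hIs := hlo' s hs0 hsa
      have hprim : ContinuousOn (fun x => (1:ℝ) / β - ∫ u in (0:ℝ)..x, f u) (Icc 0 s) := by
        have := intervalIntegral.continuousOn_primitive_interval
          (μ := volume) (a := (0:ℝ)) (b := s) (f := f) ?_
        · have h2 : ContinuousOn (fun x => ∫ u in (0:ℝ)..x, f u) (Icc 0 s) := by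
            rwa [uIcc_of_le hs0] at this
          exact continuousOn_const.sub h2
        · rw [uIcc_of_le hs0]
          exact (intervalIntegrable_iff_integrableOn_Icc_of_le hs0).1 hIs
      have hφeq : EqOn φ (fun x => (1:ℝ) / β - ∫ u in (0:ℝ)..x, f u) (Icc 0 s) :=
        fun x hx => heq x hx.1
      have hcw : ContinuousWithinAt φ (Icc 0 s) t :=
        (hprim.congr hφeq) t ⟨ht.1, hts.le⟩
      refine hcw.mono_of_mem_nhdsWithin ?_
      refine Filter.mem_of_superset (inter_mem_nhdsWithin _ (Iic_mem_nhds hts)) ?_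
      rintro x ⟨hx1, hx2⟩
      exact ⟨hx1.1, hx2⟩
    -- f is a.e. strongly measurable on Ici 0
    have hfm : AEStronglyMeasurable f (volume.restrict (Ici (0:ℝ))) := by
      have h1 : AEStronglyMeasurable f (volume.restrict (Ico 0 a)) := by
        have hc : ContinuousOn f (Ico 0 a) := by
          refine hg0c.comp hφcont ?_
          intro x hx; exact hφnn x hx.1
        exact hc.aestronglyMeasurable measurableSet_Ico
      have h2 : AEStronglyMeasurable f (volume.restrict (Ici a)) := by
        have hres : volume.restrict (Ici a) = volume.restrict (Ioi a) :=
          Measure.restrict_congr_set Ioi_ae_eq_Ici.symm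
        rw [hres]
        refine (aestronglyMeasurable_const :
          AEStronglyMeasurable (fun _ : ℝ => g0 (1 / β)) (volume.restrict (Ioi a))).congr ?_
        rw [Filter.EventuallyEq, ae_restrict_iff' measurableSet_Ioi]
        filter_upwards with x hx
        exact (congrArg g0 (hφconst x hx)).symm
      have h3 : AEStronglyMeasurable f (volume.restrict (Ico 0 a ∪ Ici a)) :=
        aestronglyMeasurable_union_iff.2 ⟨h1, h2⟩
      have h4 : Ici (0:ℝ) ⊆ Ico 0 a ∪ Ici a := by
        intro x hx
        rcases lt_or_ge x a with h | h
        · exact Or.inl ⟨hx, h⟩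
        · exact Or.inr h
      exact h3.mono_measure (Measure.restrict_mono h4 le_rfl)
    -- contradiction : f is integrable on [0, a+1]
    have : IntervalIntegrable f volume 0 (a + 1) := by
      rw [intervalIntegrable_iff_integrableOn_Ioc_of_le (by linarith)]
      have hsub : Ioc (0:ℝ) (a+1) ⊆ Ici (0:ℝ) := fun x hx => le_of_lt hx.1
      refine Integrable.mono' (integrable_const 1)
        (hfm.mono_measure (Measure.restrict_mono hsub le_rfl)) ?_
      rw [ae_restrict_iff' measurableSet_Ioc]
      filter_upwards with x hx
      rw [Real.norm_eq_abs, abs_of_nonneg (hfnn x hx.1.le)]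
      exact hfle1 x hx.1.le
    exact hup' (a + 1) (by linarith) this
  -- φ continuous on Ici 0
  have hφcont : ContinuousOn φ (Ici 0) := by
    intro t ht
    have ht' : (0:ℝ) ≤ t := ht
    have hIs := hII (t + 1) (by linarith [ht'])
    have hprim : ContinuousOn (fun x => (1:ℝ) / β - ∫ u in (0:ℝ)..x, f u) (Icc 0 (t+1)) := by
      have := intervalIntegral.continuousOn_primitive_interval
        (μ := volume) (a := (0:ℝ)) (b := t+1) (f := f) ?_
      · have h2 : ContinuousOn (fun x => ∫ u in (0:ℝ)..x, f u) (Icc 0 (t+1)) := by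
          rwa [uIcc_of_le (by linarith [ht'] : (0:ℝ) ≤ t+1)] at this
        exact continuousOn_const.sub h2
      · rw [uIcc_of_le (by linarith [ht'] : (0:ℝ) ≤ t+1)]
        exact (intervalIntegrable_iff_integrableOn_Icc_of_le (by linarith [ht'])).1 hIs
    have hφeq : EqOn φ (fun x => (1:ℝ) / β - ∫ u in (0:ℝ)..x, f u) (Icc 0 (t+1)) :=
      fun x hx => heq x hx.1
    have hcw : ContinuousWithinAt φ (Icc 0 (t+1)) t :=
      (hprim.congr hφeq) t ⟨ht, by linarith [ht']⟩
    refine hcw.mono_of_mem_nhdsWithin ?_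
    refine Filter.mem_of_superset (inter_mem_nhdsWithin _ (Iic_mem_nhds (show t < t + 1 by linarith))) ?_
    rintro x ⟨hx1, hx2⟩
    exact ⟨hx1.out, hx2⟩
  have hfcont : ContinuousOn f (Ici 0) :=
    hg0c.comp hφcont (fun x hx => hφnn x hx)
  -- derivative of φ on Ioi 0
  have hder : ∀ t : ℝ, 0 < t → HasDerivAt φ (-(f t)) t := by
    intro t ht
    have hmeasat : StronglyMeasurableAtFilter f (nhds t) :=
      ⟨Ioi 0, Ioi_mem_nhds ht,
        ((hfcont.mono Ioi_subset_Ici_self).aestronglyMeasurable measurableSet_Ioi)⟩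
    have hca : ContinuousAt f t :=
      (hfcont t (le_of_lt ht)).continuousAt (Ici_mem_nhds ht)
    have h1 : HasDerivAt (fun x => ∫ u in (0:ℝ)..x, f u) (f t) t :=
      intervalIntegral.integral_hasDerivAt_right (hII t ht.le) hmeasat hca
    have h2 : HasDerivAt (fun x => (1:ℝ)/β - ∫ u in (0:ℝ)..x, f u) (-(f t)) t := by
      exact ((hasDerivAt_const t ((1:ℝ)/β)).sub h1).congr_deriv (zero_sub _)
    refine h2.congr_of_eventuallyEq ?_
    filter_upwards [Ioi_mem_nhds ht] with x hx
    exact heq x (le_of_lt hx)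
  -- the auxiliary function ψ
  set ψ : ℝ → ℝ := fun x => φ x * Real.exp (c * x) with hψdef
  have hψder : ∀ t : ℝ, 0 < t →
      HasDerivAt ψ (-(f t) * Real.exp (c * t) + φ t * (Real.exp (c * t) * c)) t := by
    intro t ht
    have he : HasDerivAt (fun x => Real.exp (c * x)) (Real.exp (c * t) * c) t := by
      simpa using ((hasDerivAt_id t).const_mul c).exp
    exact (hder t ht).mul he
  have hψanti : AntitoneOn ψ (Ici 0) := by
    have hint' : interior (Ici (0:ℝ)) = Ioi 0 := interior_Ici
    refine antitoneOn_of_deriv_nonpos (convex_Ici 0) ?_ ?_ ?_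
    · exact hφcont.mul (Real.continuous_exp.comp (continuous_const.mul continuous_id)).continuousOn
    · rw [hint']
      intro x hx
      exact ((hψder x hx).differentiableAt).differentiableWithinAt
    · rw [hint']
      intro x hx
      rw [(hψder x hx).deriv]
      have h1 : c * φ x ≤ f x := hlow (φ x) (hφnn x hx.le)
      have h2 : 0 < Real.exp (c * x) := Real.exp_pos _
      nlinarith
  intro t ht
  have hψ0 : ψ 0 = 1 / β := by
    simp only [hψdef, mul_zero, Real.exp_zero, mul_one]
    rw [heq 0 le_rfl, intervalIntegral.integral_same, sub_zero]
  have := hψanti (self_mem_Ici) ht ht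
  rw [hψ0] at this
  -- convert ψ t ≤ 1/β into the goal
  have hexp : Real.exp (-c * t) = (Real.exp (c * t))⁻¹ := by
    rw [← Real.exp_neg]; ring_nf
  have h2 : 0 < Real.exp (c * t) := Real.exp_pos _
  rw [hexp, show (1:ℝ)/β * (Real.exp (c*t))⁻¹ = (1/β) / Real.exp (c*t) from
    (div_eq_mul_inv _ _).symm, le_div_iff₀ h2]
  exact this
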